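/- If C is a clique of size 2^{g+1}−1 in the switched graph Γ_s (0 ≤ s < g) that contains no vertex of type (iii), then the points of C form a generator of Q containing α. -/

import Mathlib

section Defs

variable {K V : Type*} [Field K] [AddCommGroup V] [Module K V]

/-- A submodule is totally singular for `Q` if `Q` vanishes on it
(i.e. the corresponding projective subspace is contained in the quadric). -/
def totallySingular (Q : QuadraticForm K V) (W : Submodule K V) : Prop :=
  ∀ v ∈ W, Q v = 0

/-- The quadric defined by `Q` is non-singular: no nonzero singular vector lies
in the radical of the polar form. -/
def quadricNonsingular (Q : QuadraticForm K V) : Prop :=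
  ∀ v : V, v ≠ 0 → Q v = 0 → ∃ w : V, QuadraticMap.polar ⇑Q v w ≠ 0

/-- The quadric of `Q` has projective index `g`: it contains a projective subspace of
dimension `g` and none of larger dimension. -/
def projIndex (Q : QuadraticForm K V) (g : ℕ) : Prop :=
  (∃ W : Submodule K V, totallySingular Q W ∧ Module.finrank K W = g + 1) ∧
  ∀ W : Submodule K V, totallySingular Q W → Module.finrank K W ≤ g + 1

/-- A generator: a `g`-dimensional projective subspace contained in the quadric. -/
def isGenerator (Q : QuadraticForm K V) (g : ℕ) (W : Submodule K V) : Prop :=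
  totallySingular Q W ∧ Module.finrank K W = g + 1

/-- The points of the quadric, as projective points. -/
abbrev QuadricPoint (Q : QuadraticForm K V) :=
  {p : Projectivization K V // Q p.rep = 0}

/-- The point-graph of the quadric: two points are adjacent when the line joining them
is contained in the quadric. -/
def pointGraph (Q : QuadraticForm K V) : SimpleGraph (QuadricPoint Q) where
  Adj p q := p ≠ q ∧ totallySingular Q (p.1.submodule ⊔ q.1.submodule)
  symm := by
    refine ⟨?_⟩
    rintro p q ⟨h1, h2⟩
    exact ⟨h1.symm, by rwa [sup_comm]⟩
  loopless := by refine ⟨?_⟩; rintro p ⟨h1, -⟩; exact h1 rfl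

/-- Type (ii) points relative to `α`: points outside `α` lying in an
`(s+1)`-space of the quadric through `α`. -/
def typeII (Q : QuadraticForm K V) (α : Submodule K V) (p : QuadricPoint Q) : Prop :=
  p.1.rep ∉ α ∧ totallySingular Q (α ⊔ p.1.submodule)

/-- Type (iii) points relative to `α`: the remaining points outside `α`. -/
def typeIII (Q : QuadraticForm K V) (α : Submodule K V) (p : QuadricPoint Q) : Prop :=
  p.1.rep ∉ α ∧ ¬ totallySingular Q (α ⊔ p.1.submodule)

/-- A pair of points, one of type (ii), the other of type (iii). -/
def mixedPair (Q : QuadraticForm K V) (α : Submodule K V) (p q : QuadricPoint Q) : Prop :=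
  (typeII Q α p ∧ typeIII Q α q) ∨ (typeII Q α q ∧ typeIII Q α p)

lemma mixedPair_comm (Q : QuadraticForm K V) (α : Submodule K V) (p q : QuadricPoint Q) :
    mixedPair Q α p q ↔ mixedPair Q α q p := by
  unfold mixedPair; exact or_comm

/-- The line joining `p` and `q` is a 2-secant: it meets the quadric in exactly two points. -/
def secant2 (Q : QuadraticForm K V) (p q : QuadricPoint Q) : Prop :=
  {x : Projectivization K V | x.rep ∈ p.1.submodule ⊔ q.1.submodule ∧ Q x.rep = 0}.ncard = 2

lemma secant2_comm (Q : QuadraticForm K V) (p q : QuadricPoint Q) :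
    secant2 Q p q ↔ secant2 Q q p := by
  unfold secant2; rw [sup_comm]

/-- The switched graph `Γ_s`: same as the point-graph, except that a type (ii) point and a
type (iii) point are adjacent iff their joining line is a 2-secant of the quadric. -/
def gammaS (Q : QuadraticForm K V) (α : Submodule K V) : SimpleGraph (QuadricPoint Q) where
  Adj p q := p ≠ q ∧ (mixedPair Q α p q → secant2 Q p q) ∧
    (¬ mixedPair Q α p q → totallySingular Q (p.1.submodule ⊔ q.1.submodule))
  symm := by
    refine ⟨?_⟩
    rintro p q ⟨h1, h2, h3⟩
    refine ⟨h1.symm, fun h => (secant2_comm Q p q).mp (h2 ((mixedPair_comm Q α q p).mp h)),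
      fun h => ?_⟩
    have := h3 (fun hx => h ((mixedPair_comm Q α p q).mp hx))
    rwa [sup_comm]
  loopless := by refine ⟨?_⟩; rintro p ⟨h1, -⟩; exact h1 rfl

/-- `v` has exactly half of the vertices of `X` as neighbours. -/
def halfIn {Ω : Type*} (G : SimpleGraph Ω) (X : Set Ω) (v : Ω) : Prop :=
  2 * (X ∩ G.neighborSet v).ncard = X.ncard

/-- The Godsil–McKay switch of `G` with respect to the part `X`: every vertex outside `X`
having exactly half of `X` as neighbours has its edges to `X` complemented. -/
def gmSwitch {Ω : Type*} (G : SimpleGraph Ω) (X : Set Ω) : SimpleGraph Ω where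
  Adj v w :=
    (((v ∈ X ∧ w ∉ X ∧ halfIn G X w) ∨ (w ∈ X ∧ v ∉ X ∧ halfIn G X v)) ∧
        ¬ G.Adj v w ∧ v ≠ w) ∨
    (¬ ((v ∈ X ∧ w ∉ X ∧ halfIn G X w) ∨ (w ∈ X ∧ v ∉ X ∧ halfIn G X v)) ∧ G.Adj v w)
  symm := by
    refine ⟨?_⟩
    rintro v w (⟨h1, h2, h3⟩ | ⟨h1, h2⟩)
    · exact Or.inl ⟨h1.symm, fun h => h2 h.symm, h3.symm⟩
    · exact Or.inr ⟨fun h => h1 h.symm, h2.symm⟩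
  loopless := by
    refine ⟨?_⟩
    rintro v (⟨h1, h2, h3⟩ | ⟨h1, h2⟩)
    · exact h3 rfl
    · exact G.loopless.irrefl v h2

noncomputable instance {K V : Type*} [Field K] [AddCommGroup V] [Module K V] [Finite V]
    (Q : QuadraticForm K V) : Fintype (QuadricPoint Q) := by
  have : Finite (Projectivization K V) := Quotient.finite _
  exact Fintype.ofFinite _

end Defs

section Aux

open QuadraticMap Submodule

variable {K V : Type*} [Field K] [AddCommGroup V] [Module K V]

lemma polar_span_zero (Q : QuadraticForm K V) (S : Set V)
    (hp : ∀ v ∈ S, ∀ w ∈ S, polar ⇑Q v w = 0) :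
    ∀ v ∈ span K S, ∀ w ∈ span K S, polar ⇑Q v w = 0 := by
  have hleft : ∀ w ∈ S, ∀ v ∈ span K S, polar ⇑Q v w = 0 := by
    intro w hw v hv
    induction hv using span_induction with
    | mem x hx => exact hp x hx w hw
    | zero => simp [QuadraticMap.polar]
    | add x y hx hy ihx ihy => rw [polar_add_left, ihx, ihy, add_zero]
    | smul a x hx ih => rw [polar_smul_left, ih, smul_zero]
  intro v hv w hw
  induction hw using span_induction with
  | mem x hx => exact hleft x hx v hv
  | zero => simp [QuadraticMap.polar]
  | add x y hx hy ihx ihy => rw [polar_add_right, ihx, ihy, add_zero]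
  | smul a x hx ih => rw [polar_smul_right, ih, smul_zero]

lemma ts_span (Q : QuadraticForm K V) (S : Set V)
    (h0 : ∀ v ∈ S, Q v = 0)
    (hp : ∀ v ∈ S, ∀ w ∈ S, polar ⇑Q v w = 0) :
    totallySingular Q (span K S) := by
  have hps := polar_span_zero Q S hp
  intro v hv
  induction hv using span_induction with
  | mem x hx => exact h0 x hx
  | zero => simp
  | add x y hx hy ihx ihy =>
      have h := hps x hx y hy
      simp only [QuadraticMap.polar, ihx, ihy, sub_zero] at h
      exact h
  | smul a x hx ih => rw [QuadraticMap.map_smul, ih, smul_zero]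

lemma polar_eq_zero_of_ts (Q : QuadraticForm K V) {W : Submodule K V}
    (hW : totallySingular Q W) {v w : V} (hv : v ∈ W) (hw : w ∈ W) :
    polar ⇑Q v w = 0 := by
  simp [QuadraticMap.polar, hW v hv, hW w hw, hW (v + w) (W.add_mem hv hw)]

end Aux

/- **Statement 11**: a clique of `Γ_s` of size `2^(g+1) - 1` containing no type (iii)
vertex is the point set of a generator of the quadric containing `α`. -/
theorem g_clique_no_typeIII_is_classA (n g s : ℕ) (hg : 1 ≤ g) (hs : s < g)
    (Q : QuadraticForm (ZMod 2) (Fin (n + 1) → ZMod 2)) (hQ : quadricNonsingular Q)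
    (hgi : projIndex Q g)
    (α : Submodule (ZMod 2) (Fin (n + 1) → ZMod 2)) (hα : totallySingular Q α)
    (hαd : Module.finrank (ZMod 2) ↥α = s + 1)
    (C : Set (QuadricPoint Q)) (hC : (gammaS Q α).IsClique C)
    (hcard : C.ncard = 2 ^ (g + 1) - 1)
    (hno3 : ∀ p ∈ C, ¬ typeIII Q α p) :
    ∃ W : Submodule (ZMod 2) (Fin (n + 1) → ZMod 2),
      isGenerator Q g W ∧ α ≤ W ∧ ∀ p : QuadricPoint Q, p ∈ C ↔ p.1.rep ∈ W := by
  classical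
  have hrepmem : ∀ p : QuadricPoint Q, p.1.rep ∈ p.1.submodule := by
    intro p
    rw [Projectivization.submodule_eq]
    exact Submodule.mem_span_singleton_self _
  -- every point of C spans a totally singular space together with α
  have htsp : ∀ p ∈ C, totallySingular Q (α ⊔ p.1.submodule) := by
    intro p hp
    by_cases h : p.1.rep ∈ α
    · have hsub : p.1.submodule ≤ α := by
        rw [Projectivization.submodule_eq]
        exact (Submodule.span_singleton_le_iff_mem _ _).mpr h
      rw [sup_eq_left.mpr hsub]
      exact hα
    · exact of_not_not (fun hn => hno3 p hp ⟨h, hn⟩)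
  -- any two distinct points of C span a totally singular line
  have hts2 : ∀ p ∈ C, ∀ q ∈ C, p ≠ q →
      totallySingular Q (p.1.submodule ⊔ q.1.submodule) := by
    intro p hp q hq hne
    obtain ⟨-, -, h3⟩ := hC hp hq hne
    apply h3
    rintro (⟨-, h3'⟩ | ⟨-, h3'⟩)
    · exact hno3 q hq h3'
    · exact hno3 p hp h3'
  set S : Set (Fin (n + 1) → ZMod 2) :=
    (α : Set (Fin (n + 1) → ZMod 2)) ∪ (fun p : QuadricPoint Q => p.1.rep) '' C with hS
  have hQ0 : ∀ v ∈ S, Q v = 0 := by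
    rintro v (hv | ⟨p, hp, rfl⟩)
    · exact hα v hv
    · exact p.2
  have hpS : ∀ v ∈ S, ∀ w ∈ S, QuadraticMap.polar ⇑Q v w = 0 := by
    rintro v (hv | ⟨p, hp, rfl⟩) w (hw | ⟨q, hq, rfl⟩)
    · exact polar_eq_zero_of_ts Q hα hv hw
    · exact polar_eq_zero_of_ts Q (htsp q hq) (Submodule.mem_sup_left hv)
        (Submodule.mem_sup_right (hrepmem q))
    · exact polar_eq_zero_of_ts Q (htsp p hp) (Submodule.mem_sup_right (hrepmem p))
        (Submodule.mem_sup_left hw)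
    · by_cases hpq : p = q
      · subst hpq
        have h2 : p.1.rep + p.1.rep = 0 := by
          rw [← two_smul (ZMod 2) p.1.rep, show (2 : ZMod 2) = 0 from rfl, zero_smul]
        simp [QuadraticMap.polar, h2, p.2]
      · exact polar_eq_zero_of_ts Q (hts2 p hp q hq hpq)
          (Submodule.mem_sup_left (hrepmem p)) (Submodule.mem_sup_right (hrepmem q))
  set W := Submodule.span (ZMod 2) S with hW
  have hts : totallySingular Q W := ts_span Q S hQ0 hpS
  have hαW : α ≤ W := fun x hx => Submodule.subset_span (Or.inl hx)
  have hCW : ∀ p ∈ C, p.1.rep ∈ W := fun p hp => Submodule.subset_span (Or.inr ⟨p, hp, rfl⟩)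
  have hdle : Module.finrank (ZMod 2) W ≤ g + 1 := hgi.2 W hts
  have hinj : Function.Injective (fun p : QuadricPoint Q => p.1.rep) := by
    intro p q h
    have h1 : p.1.submodule = q.1.submodule := by
      rw [Projectivization.submodule_eq, Projectivization.submodule_eq]
      simp only at h
      rw [h]
    exact Subtype.ext (Projectivization.submodule_injective h1)
  have hcardW : (W : Set (Fin (n + 1) → ZMod 2)).ncard = 2 ^ Module.finrank (ZMod 2) W := by
    have hnat : Nat.card ↥W = 2 ^ Module.finrank (ZMod 2) W := by
      rw [Nat.card_eq_fintype_card, Module.card_eq_pow_finrank (K := ZMod 2) (V := ↥W), ZMod.card]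
    rw [← Nat.card_coe_set_eq]
    exact hnat
  have hbound : ∀ T : Set (QuadricPoint Q), (∀ p ∈ T, p.1.rep ∈ W) →
      T.ncard ≤ 2 ^ Module.finrank (ZMod 2) W - 1 := by
    intro T hT
    have himg : (fun p : QuadricPoint Q => p.1.rep) '' T ⊆
        (W : Set (Fin (n + 1) → ZMod 2)) \ {0} := by
      rintro v ⟨p, hp, rfl⟩
      exact ⟨hT p hp, p.1.rep_nonzero⟩
    calc T.ncard = ((fun p : QuadricPoint Q => p.1.rep) '' T).ncard :=
          (Set.ncard_image_of_injective T hinj).symm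
      _ ≤ ((W : Set (Fin (n + 1) → ZMod 2)) \ {0}).ncard :=
          Set.ncard_le_ncard himg (Set.toFinite _)
      _ = (W : Set (Fin (n + 1) → ZMod 2)).ncard - 1 :=
          Set.ncard_diff_singleton_of_mem W.zero_mem
      _ = 2 ^ Module.finrank (ZMod 2) W - 1 := by rw [hcardW]
  have h1 : 2 ^ (g + 1) - 1 ≤ 2 ^ Module.finrank (ZMod 2) W - 1 := by
    rw [← hcard]
    exact hbound C hCW
  have hd : Module.finrank (ZMod 2) W = g + 1 := by
    have hp1 : 0 < 2 ^ (g + 1) := Nat.pow_pos (by norm_num)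
    have hp2 : 0 < 2 ^ Module.finrank (ZMod 2) W := Nat.pow_pos (by norm_num)
    have h2 : 2 ^ (g + 1) ≤ 2 ^ Module.finrank (ZMod 2) W := by omega
    have h3 := (Nat.pow_le_pow_iff_right (by norm_num : 1 < 2)).mp h2
    omega
  have hC'le : {p : QuadricPoint Q | p.1.rep ∈ W}.ncard ≤ 2 ^ (g + 1) - 1 := by
    rw [← hd]
    exact hbound _ (fun p hp => hp)
  have hCeq : C = {p : QuadricPoint Q | p.1.rep ∈ W} := by
    refine Set.eq_of_subset_of_ncard_le (fun p hp => hCW p hp) ?_ (Set.toFinite _)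
    rw [hcard]
    exact hC'le
  exact ⟨W, ⟨hts, hd⟩, hαW, fun p => by rw [hCeq]; rfl⟩
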